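/- (Counting group elements moving a point a small distance; equation (8).) For every ℓ > 0, every point z in the hyperbolic upper half-plane ℍ, and every nonzero integer k: if the hyperbolic distance satisfies dist(z, e^{kℓ}·z) ≤ 1, then |k| · ℓ · (|z| / Im z) ≤ √(2·(cosh(1) − 1)). Consequently, the set of nonzero integers k with dist(z, e^{kℓ}·z) ≤ 1 is finite and has cardinality at most 2·√(2·(cosh(1) − 1)) · (Im z) / (ℓ · |z|). -/

import Mathlib

open scoped UpperHalfPlane

/-- The dilation `z ↦ e^s · z` of the upper half-plane (a hyperbolic isometry fixing the
imaginary axis). -/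
noncomputable def UpperHalfPlane.dilate (s : ℝ) (z : ℍ) : ℍ :=
  UpperHalfPlane.mk ((Real.exp s : ℂ) * (z : ℂ)) <| by
    rw [Complex.mul_im, Complex.ofReal_re, Complex.ofReal_im]
    simpa using mul_pos (Real.exp_pos s) z.im_pos

lemma aux_self_le_sinh {x : ℝ} (hx : 0 ≤ x) : x ≤ Real.sinh x := by
  rcases hx.lt_or_eq with h | h
  · exact (Real.self_lt_sinh_iff.2 h).le
  · simp [← h]

lemma aux_sq_half_le_cosh (s : ℝ) : s ^ 2 / 2 ≤ Real.cosh s - 1 := by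
  have h1 : Real.cosh s = 1 + 2 * Real.sinh (s / 2) ^ 2 := by
    have := Real.cosh_two_mul (s / 2)
    have h2 := Real.cosh_sq (s / 2)
    rw [show 2 * (s / 2) = s by ring] at this
    linarith
  have h3 : (s / 2) ^ 2 ≤ Real.sinh (s / 2) ^ 2 := by
    rw [← sq_abs (s / 2), ← sq_abs (Real.sinh (s / 2))]
    have : |s / 2| ≤ |Real.sinh (s / 2)| := by
      rcases le_or_gt 0 (s / 2) with h | h
      · rw [abs_of_nonneg h, abs_of_nonneg (by simpa [Real.sinh_nonneg_iff] using h)]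
        exact aux_self_le_sinh h
      · rw [abs_of_neg h, abs_of_neg (by simpa [Real.sinh_neg_iff] using h), ← Real.sinh_neg]
        exact aux_self_le_sinh (by linarith)
    exact pow_le_pow_left₀ (abs_nonneg _) this 2
  nlinarith

lemma aux_exp_ident (s : ℝ) : (1 - Real.exp s) ^ 2 / Real.exp s = 2 * (Real.cosh s - 1) := by
  rw [Real.cosh_eq, Real.exp_neg]
  field_simp
  ring

/-- Equation (8): if `dist (z, e^{kℓ}·z) ≤ 1` for a nonzero integer `k`, then
`|k| ℓ |z| / Im z ≤ √(2 (cosh 1 - 1))`; consequently the set of such nonzero `k` is finite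
with cardinality at most `2 √(2 (cosh 1 - 1)) · Im z / (ℓ |z|)`. -/
theorem counting_small_translations (ℓ : ℝ) (hℓ : 0 < ℓ) (z : ℍ) :
    (∀ k : ℤ, k ≠ 0 → dist z (UpperHalfPlane.dilate (k * ℓ) z) ≤ 1 →
      |(k : ℝ)| * ℓ * (‖(z : ℂ)‖ / z.im) ≤ Real.sqrt (2 * (Real.cosh 1 - 1))) ∧
    {k : ℤ | k ≠ 0 ∧ dist z (UpperHalfPlane.dilate (k * ℓ) z) ≤ 1}.Finite ∧
    ({k : ℤ | k ≠ 0 ∧ dist z (UpperHalfPlane.dilate (k * ℓ) z) ≤ 1}.ncard : ℝ) ≤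
      2 * Real.sqrt (2 * (Real.cosh 1 - 1)) * z.im / (ℓ * ‖(z : ℂ)‖) := by
  set a : ℝ := ‖(z : ℂ)‖ with ha
  have hy : 0 < z.im := z.im_pos
  have haz : (z : ℂ) ≠ 0 := UpperHalfPlane.ne_zero z
  have ha0 : 0 < a := by simpa [ha] using (norm_pos_iff.2 haz)
  -- Part 1
  have main : ∀ k : ℤ, k ≠ 0 → dist z (UpperHalfPlane.dilate (k * ℓ) z) ≤ 1 →
      |(k : ℝ)| * ℓ * (a / z.im) ≤ Real.sqrt (2 * (Real.cosh 1 - 1)) := by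
    intro k hk hd
    set s : ℝ := k * ℓ with hs
    set w : ℍ := UpperHalfPlane.dilate s z with hw
    have hwc : (w : ℂ) = (Real.exp s : ℂ) * (z : ℂ) := rfl
    have hwim : w.im = Real.exp s * z.im := by
      have h : w.im = ((Real.exp s : ℂ) * (z : ℂ)).im := rfl
      rw [h, Complex.mul_im, Complex.ofReal_re, Complex.ofReal_im, UpperHalfPlane.coe_im,
        UpperHalfPlane.coe_re]
      ring
    have hdistC : dist (z : ℂ) (w : ℂ) = |1 - Real.exp s| * a := by
      rw [Complex.dist_eq, hwc]
      have : (z : ℂ) - (Real.exp s : ℂ) * (z : ℂ) = ((1 - Real.exp s : ℝ) : ℂ) * (z : ℂ) := by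
        push_cast; ring
      rw [this, norm_mul, Complex.norm_real, Real.norm_eq_abs, ha]
    have hcosh := UpperHalfPlane.cosh_dist z w
    have h1 : Real.cosh (dist z w) ≤ Real.cosh 1 := by
      rw [Real.cosh_le_cosh]
      rw [abs_of_nonneg dist_nonneg]
      simpa using hd
    rw [hcosh, hdistC, hwim] at h1
    have hkey : (|1 - Real.exp s| * a) ^ 2 / (2 * z.im * (Real.exp s * z.im))
        = ((1 - Real.exp s) ^ 2 / Real.exp s) * (a ^ 2 / (2 * z.im ^ 2)) := by
      rw [mul_pow, sq_abs, div_mul_div_comm]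
      congr 1
      ring
    rw [hkey, aux_exp_ident] at h1
    have h2 : s ^ 2 / 2 * (a ^ 2 / z.im ^ 2) ≤ Real.cosh 1 - 1 := by
      have hc := aux_sq_half_le_cosh s
      have ht : 0 ≤ a ^ 2 / z.im ^ 2 := by positivity
      have hrw : 2 * (Real.cosh s - 1) * (a ^ 2 / (2 * z.im ^ 2))
          = (Real.cosh s - 1) * (a ^ 2 / z.im ^ 2) := by ring
      rw [hrw] at h1
      exact le_trans (mul_le_mul_of_nonneg_right hc ht) (by linarith)
    apply Real.le_sqrt_of_sq_le
    have heq : (|(k : ℝ)| * ℓ * (a / z.im)) ^ 2 = s ^ 2 * (a ^ 2 / z.im ^ 2) := by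
      rw [hs]
      rw [mul_pow, mul_pow, div_pow, sq_abs]
      ring
    rw [heq, show s ^ 2 * (a ^ 2 / z.im ^ 2) = 2 * (s ^ 2 / 2 * (a ^ 2 / z.im ^ 2)) from by ring]
    linarith
  -- bound |k| by C
  set C : ℝ := Real.sqrt (2 * (Real.cosh 1 - 1)) * z.im / (ℓ * a) with hC
  have hC0 : 0 ≤ C := by positivity
  have hbound : ∀ k : ℤ, k ∈ {k : ℤ | k ≠ 0 ∧ dist z (UpperHalfPlane.dilate (k * ℓ) z) ≤ 1} →
      |k| ≤ ⌊C⌋ := by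
    intro k hkmem
    obtain ⟨hk, hd⟩ := hkmem
    have h := main k hk hd
    have h2 : |(k : ℝ)| ≤ C := by
      rw [hC, le_div_iff₀ (by positivity)]
      calc |(k : ℝ)| * (ℓ * a) = |(k : ℝ)| * ℓ * (a / z.im) * z.im := by
            field_simp
        _ ≤ Real.sqrt (2 * (Real.cosh 1 - 1)) * z.im :=
            mul_le_mul_of_nonneg_right h hy.le
    rw [Int.le_floor]
    exact_mod_cast (by exact_mod_cast h2 : (|k| : ℝ) ≤ C)
  set N : ℤ := ⌊C⌋ with hN
  have hN0 : 0 ≤ N := Int.le_floor.2 (by simpa using hC0)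
  have hsub : {k : ℤ | k ≠ 0 ∧ dist z (UpperHalfPlane.dilate (k * ℓ) z) ≤ 1} ⊆
      ((Finset.Icc (-N) N).erase 0 : Finset ℤ) := by
    intro k hk
    have hb := hbound k hk
    simp only [Finset.coe_erase, Finset.coe_Icc, Set.mem_diff, Set.mem_Icc,
      Set.mem_singleton_iff]
    exact ⟨abs_le.1 hb, hk.1⟩
  have hfin : {k : ℤ | k ≠ 0 ∧ dist z (UpperHalfPlane.dilate (k * ℓ) z) ≤ 1}.Finite :=
    Set.Finite.subset ((Finset.Icc (-N) N).erase 0).finite_toSet hsub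
  refine ⟨main, hfin, ?_⟩
  have hcard : {k : ℤ | k ≠ 0 ∧ dist z (UpperHalfPlane.dilate (k * ℓ) z) ≤ 1}.ncard ≤
      ((Finset.Icc (-N) N).erase 0).card := by
    rw [← Set.ncard_coe_finset]
    exact Set.ncard_le_ncard hsub ((Finset.Icc (-N) N).erase 0).finite_toSet
  have hcard2 : (((Finset.Icc (-N) N).erase 0).card : ℤ) = 2 * N := by
    have h0 : (0 : ℤ) ∈ Finset.Icc (-N) N := by
      simp [Finset.mem_Icc]; omega
    rw [Finset.card_erase_of_mem h0, Int.card_Icc]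
    omega
  have hfinal : ({k : ℤ | k ≠ 0 ∧ dist z (UpperHalfPlane.dilate (k * ℓ) z) ≤ 1}.ncard : ℝ) ≤
      2 * C := by
    calc ({k : ℤ | k ≠ 0 ∧ dist z (UpperHalfPlane.dilate (k * ℓ) z) ≤ 1}.ncard : ℝ)
        ≤ (((Finset.Icc (-N) N).erase 0).card : ℝ) := by exact_mod_cast hcard
      _ = 2 * (N : ℝ) := by exact_mod_cast hcard2
      _ ≤ 2 * C := by
          have := Int.floor_le C
          rw [← hN] at this
          linarith
  calc ({k : ℤ | k ≠ 0 ∧ dist z (UpperHalfPlane.dilate (k * ℓ) z) ≤ 1}.ncard : ℝ)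
      ≤ 2 * C := hfinal
    _ = 2 * Real.sqrt (2 * (Real.cosh 1 - 1)) * z.im / (ℓ * a) := by rw [hC]; ring
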